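/- Fix N ≥ 1 and VDAR(1) parameters for one variable: ν ∈ [0,1), χ ∈ (0,1), and λ_1,...,λ_N ≥ 0 with ∑_{j=1}^N λ_j = 1. Then there exists a unique vector (J_1,...,J_N, h) ∈ ℝ^{N+1} such that the N+1 matching equations Λ( h - ∑_{j≤k} J_j + ∑_{j>k} J_j ) = ν ∑_{j>k} λ_j + (1-ν) χ hold for every k = 0, 1, ..., N, where Λ(x) = e^{2x}/(1+e^{2x}) (for k = 0 the equation reads Λ(h + ∑_j J_j) = ν + (1-ν)χ, and for k = N it reads Λ(h - ∑_j J_j) = (1-ν)χ). -/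

import Mathlib

/-- The logistic function `Λ(x) = e^{2x}/(1 + e^{2x})`. -/
noncomputable def Lam (x : ℝ) : ℝ := Real.exp (2 * x) / (1 + Real.exp (2 * x))

noncomputable def invLam (p : ℝ) : ℝ := Real.log (p / (1 - p)) / 2

lemma Lam_invLam {p : ℝ} (h0 : 0 < p) (h1 : p < 1) : Lam (invLam p) = p := by
  have h1' : 0 < 1 - p := by linarith
  have hpos : 0 < p / (1 - p) := div_pos h0 h1'
  unfold Lam invLam
  rw [show 2 * (Real.log (p / (1 - p)) / 2) = Real.log (p / (1 - p)) by ring,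
    Real.exp_log hpos]
  field_simp
  ring

lemma Lam_inj : Function.Injective Lam := by
  intro x y h
  unfold Lam at h
  have hx := Real.exp_pos (2 * x)
  have hy := Real.exp_pos (2 * y)
  have h2 : Real.exp (2 * x) = Real.exp (2 * y) := by
    field_simp at h
    nlinarith [h]
  have := Real.exp_injective h2
  linarith

lemma filter_lt_zero (N : ℕ) :
    Finset.univ.filter (fun j : Fin N => (j : ℕ) < 0) = ∅ := by
  simp

lemma filter_lt_top (N : ℕ) :
    Finset.univ.filter (fun j : Fin N => (j : ℕ) < N) = Finset.univ := by
  ext j; simp [j.isLt]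

lemma filter_ge_zero (N : ℕ) :
    Finset.univ.filter (fun j : Fin N => 0 ≤ (j : ℕ)) = Finset.univ := by
  simp

lemma filter_ge_top (N : ℕ) :
    Finset.univ.filter (fun j : Fin N => N ≤ (j : ℕ)) = ∅ := by
  ext j
  have := j.isLt
  simp only [Finset.mem_filter, Finset.mem_univ, true_and, Finset.notMem_empty, iff_false]
  omega

lemma sum_filter_lt_succ {N : ℕ} (f : Fin N → ℝ) (k : ℕ) (hk : k < N) :
    ∑ j ∈ Finset.univ.filter (fun j : Fin N => (j : ℕ) < k + 1), f j
      = f ⟨k, hk⟩ + ∑ j ∈ Finset.univ.filter (fun j : Fin N => (j : ℕ) < k), f j := by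
  have h : Finset.univ.filter (fun j : Fin N => (j : ℕ) < k + 1)
      = insert ⟨k, hk⟩ (Finset.univ.filter (fun j : Fin N => (j : ℕ) < k)) := by
    ext j; simp [Fin.ext_iff]; omega
  rw [h, Finset.sum_insert (by simp)]

lemma sum_filter_ge_succ {N : ℕ} (f : Fin N → ℝ) (k : ℕ) (hk : k < N) :
    ∑ j ∈ Finset.univ.filter (fun j : Fin N => k ≤ (j : ℕ)), f j
      = f ⟨k, hk⟩ + ∑ j ∈ Finset.univ.filter (fun j : Fin N => k + 1 ≤ (j : ℕ)), f j := by
  have h : Finset.univ.filter (fun j : Fin N => k ≤ (j : ℕ))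
      = insert ⟨k, hk⟩ (Finset.univ.filter (fun j : Fin N => k + 1 ≤ (j : ℕ))) := by
    ext j; simp [Fin.ext_iff]; omega
  rw [h, Finset.sum_insert (by simp)]

lemma sum_filter_lt_telescope {N : ℕ} (g : ℕ → ℝ) :
    ∀ k, k ≤ N → ∑ j ∈ Finset.univ.filter (fun j : Fin N => (j : ℕ) < k),
      ((g (j : ℕ) - g ((j : ℕ) + 1)) / 2) = (g 0 - g k) / 2 := by
  intro k
  induction k with
  | zero => intro _; simp
  | succ k ih =>
    intro hk
    rw [sum_filter_lt_succ (fun j : Fin N => (g (j : ℕ) - g ((j : ℕ) + 1)) / 2) k (by omega),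
      ih (by omega)]
    simp only
    ring

lemma sum_filter_ge_eq {N : ℕ} (f : Fin N → ℝ) (k : ℕ) :
    ∑ j ∈ Finset.univ.filter (fun j : Fin N => k ≤ (j : ℕ)), f j
      = (∑ j, f j) - ∑ j ∈ Finset.univ.filter (fun j : Fin N => (j : ℕ) < k), f j := by
  rw [show Finset.univ.filter (fun j : Fin N => k ≤ (j : ℕ))
      = Finset.univ \ Finset.univ.filter (fun j : Fin N => (j : ℕ) < k) from by
    ext j; simp]
  exact Finset.sum_sdiff_eq_sub (Finset.filter_subset _ _)

theorem stmt_11 (N : ℕ) (hN : 1 ≤ N) (ν χ : ℝ) (lam : Fin N → ℝ)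
    (hν : ν ∈ Set.Ico (0 : ℝ) 1) (hχ : χ ∈ Set.Ioo (0 : ℝ) 1)
    (hlam : ∀ j, 0 ≤ lam j) (hsum : ∑ j, lam j = 1) :
    ∃! Jh : (Fin N → ℝ) × ℝ,
      ∀ k : ℕ, k ≤ N →
        Lam (Jh.2 - (∑ j ∈ Finset.univ.filter (fun j : Fin N => (j : ℕ) < k), Jh.1 j)
              + (∑ j ∈ Finset.univ.filter (fun j : Fin N => k ≤ (j : ℕ)), Jh.1 j))
          = ν * (∑ j ∈ Finset.univ.filter (fun j : Fin N => k ≤ (j : ℕ)), lam j)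
            + (1 - ν) * χ := by
  obtain ⟨hν0, hν1⟩ := hν
  obtain ⟨hχ0, hχ1⟩ := hχ
  -- the right-hand sides
  set R : ℕ → ℝ := fun k =>
    ν * (∑ j ∈ Finset.univ.filter (fun j : Fin N => k ≤ (j : ℕ)), lam j) + (1 - ν) * χ
    with hRdef
  have hS0 : ∀ k : ℕ,
      0 ≤ ∑ j ∈ Finset.univ.filter (fun j : Fin N => k ≤ (j : ℕ)), lam j :=
    fun k => Finset.sum_nonneg fun j _ => hlam j
  have hS1 : ∀ k : ℕ,
      (∑ j ∈ Finset.univ.filter (fun j : Fin N => k ≤ (j : ℕ)), lam j) ≤ 1 := by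
    intro k
    rw [← hsum]
    exact Finset.sum_le_sum_of_subset_of_nonneg (Finset.filter_subset _ _)
      (fun j _ _ => hlam j)
  have hR0 : ∀ k, 0 < R k := by
    intro k
    have h1 : 0 ≤ ν * (∑ j ∈ Finset.univ.filter (fun j : Fin N => k ≤ (j : ℕ)), lam j) :=
      mul_nonneg hν0 (hS0 k)
    have h2 : 0 < (1 - ν) * χ := mul_pos (by linarith) hχ0
    simp only [hRdef]
    linarith
  have hR1 : ∀ k, R k < 1 := by
    intro k
    have h1 : ν * (∑ j ∈ Finset.univ.filter (fun j : Fin N => k ≤ (j : ℕ)), lam j) ≤ ν := by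
      nlinarith [hS1 k, hS0 k]
    have h2 : (1 - ν) * χ < 1 - ν := by nlinarith
    simp only [hRdef]
    linarith
  -- the target arguments
  set t : ℕ → ℝ := fun k => invLam (R k) with htdef
  have hLt : ∀ k, Lam (t k) = R k := fun k => Lam_invLam (hR0 k) (hR1 k)
  refine ⟨(fun j : Fin N => (t (j : ℕ) - t ((j : ℕ) + 1)) / 2, (t 0 + t N) / 2), ?_, ?_⟩
  · -- existence
    intro k hk
    dsimp only
    rw [sum_filter_lt_telescope t k hk, sum_filter_ge_eq,
      show (∑ j : Fin N, (t (j : ℕ) - t ((j : ℕ) + 1)) / 2) = (t 0 - t N) / 2 from by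
        rw [← sum_filter_lt_telescope t N le_rfl, filter_lt_top],
      sum_filter_lt_telescope t k hk]
    rw [show (t 0 + t N) / 2 - (t 0 - t k) / 2 + ((t 0 - t N) / 2 - (t 0 - t k) / 2) = t k
      from by ring]
    exact hLt k
  · -- uniqueness
    rintro ⟨J, h⟩ hy
    have harg : ∀ k, k ≤ N →
        h - (∑ j ∈ Finset.univ.filter (fun j : Fin N => (j : ℕ) < k), J j)
          + (∑ j ∈ Finset.univ.filter (fun j : Fin N => k ≤ (j : ℕ)), J j) = t k := by
      intro k hk
      apply Lam_inj
      rw [hLt k]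
      exact hy k hk
    have h0 : h + (∑ j, J j) = t 0 := by
      have := harg 0 (by omega)
      rwa [filter_lt_zero, filter_ge_zero, Finset.sum_empty, sub_zero] at this
    have hT : h - (∑ j, J j) = t N := by
      have := harg N le_rfl
      rwa [filter_lt_top, filter_ge_top, Finset.sum_empty, add_zero] at this
    have hh : h = (t 0 + t N) / 2 := by linarith
    rw [Prod.mk.injEq]
    refine ⟨funext fun j => ?_, hh⟩
    have h1 := harg (j : ℕ) (le_of_lt j.isLt)
    have h2 := harg ((j : ℕ) + 1) j.isLt
    rw [sum_filter_lt_succ J (j : ℕ) j.isLt] at h2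
    rw [sum_filter_ge_succ J (j : ℕ) j.isLt] at h1
    simp only [Fin.eta] at h1 h2
    linarith
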